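/- Let n ≥ 2 and let Γ be an (n+1)-regular properly edge-colored graph with colors {0,…,n} in which every bi-colored cycle has length exactly 4, and suppose for every subset {k_0,…,k_i} ⊆ {0,…,n} of size i+1 the number of connected components of the subgraph induced by colors {k_0,…,k_i} equals 2^{n-i-1} (for 0 ≤ i ≤ n−1). Then Γ has exactly 2^n vertices, and each connected component of the subgraph induced by any k-element color set is isomorphic (as a colored graph) to the 1-skeleton of the k-dimensional cube with parallel edge classes monochromatic. -/

import Mathlib

open Finset Function Relation

namespace Stmt8Aux
variable {V ι : Type} [DecidableEq ι] [Fintype ι]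

/-- products of commuting involutions indexed by `ZMod 2` exponent vectors -/
def rho (g : ι → Equiv.Perm V) (hc : ∀ a b, Commute (g a) (g b)) (x : ι → ZMod 2) :
    Equiv.Perm V :=
  Finset.univ.noncommProd (fun c => g c ^ (x c).val)
    (Set.pairwise_of_forall _ _ fun a b => (hc a b).pow_pow _ _)

lemma pow_zmod_add {G : Type*} [Monoid G] (u : G) (hu : u * u = 1) (a b : ZMod 2) :
    u ^ ((a + b).val) = u ^ a.val * u ^ b.val := by
  have h2 : u ^ 2 = 1 := by rw [pow_two, hu]
  have key : ∀ m : ℕ, u ^ (m % 2) = u ^ m := by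
    intro m
    conv_rhs => rw [← Nat.div_add_mod m 2]
    rw [pow_add, pow_mul, h2, one_pow, one_mul]
  rw [ZMod.val_add, key, pow_add]

lemma rho_zero (g : ι → Equiv.Perm V) (hc : ∀ a b, Commute (g a) (g b)) :
    rho g hc 0 = 1 := by
  rw [rho, Finset.noncommProd_eq_pow_card _ _ _ 1 (fun c _ => by simp), one_pow]

lemma rho_add (g : ι → Equiv.Perm V) (hc : ∀ a b, Commute (g a) (g b))
    (hg : ∀ c, g c * g c = 1) (x y : ι → ZMod 2) :
    rho g hc (x + y) = rho g hc x * rho g hc y := by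
  rw [rho, rho, rho]
  rw [Finset.noncommProd_congr rfl (g := (fun c => g c ^ (x c).val) * (fun c => g c ^ (y c).val))
    (fun c _ => by simp [Pi.mul_apply, Pi.add_apply, pow_zmod_add (g c) (hg c)])
    (fun a _ b _ _ => (hc a b).pow_pow _ _)]
  exact Finset.noncommProd_mul_distrib _ _ (fun a _ b _ _ => (hc a b).pow_pow _ _)
    (fun a _ b _ _ => (hc a b).pow_pow _ _) (fun a _ b _ _ => (hc a b).pow_pow _ _)

lemma rho_single (g : ι → Equiv.Perm V) (hc : ∀ a b, Commute (g a) (g b)) (c : ι) :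
    rho g hc (Pi.single c 1) = g c := by
  rw [rho]
  rw [Finset.noncommProd_congr (Finset.insert_erase (Finset.mem_univ c)).symm
    (g := fun d => g d ^ ((Pi.single c 1 : ι → ZMod 2) d).val) (fun d _ => rfl)
    (Set.pairwise_of_forall _ _ fun a b => (hc a b).pow_pow _ _)]
  erw [Finset.noncommProd_insert_of_notMem _ _ _ _ (Finset.notMem_erase c _)]
  rw [Finset.noncommProd_eq_pow_card _ _ _ 1
    (fun d hd => by
      have hdc : d ≠ c := Finset.ne_of_mem_erase hd
      simp [Pi.single_eq_of_ne hdc]), one_pow, mul_one]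
  have : ((Pi.single c 1 : ι → ZMod 2) c).val = 1 := by
    rw [Pi.single_eq_same]; decide
  rw [this, pow_one]


set_option linter.unusedSectionVars false in
lemma reachable_rho {r : V → V → Prop} (g : ι → Equiv.Perm V)
    (hc : ∀ a b, Commute (g a) (g b)) (hstep : ∀ c w, r w (g c w))
    (x : ι → ZMod 2) (v : V) : ReflTransGen r v (rho g hc x v) := by
  rw [rho]
  have key : ∀ s : Finset ι, ReflTransGen r v
      ((s.noncommProd (fun c => g c ^ (x c).val)
        (Set.pairwise_of_forall _ _ fun a b => (hc a b).pow_pow _ _)) v) := by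
    intro s
    induction s using Finset.induction_on with
    | empty =>
      rw [Finset.noncommProd_empty]
      exact ReflTransGen.refl
    | @insert a s ha ih =>
      rw [Finset.noncommProd_insert_of_notMem _ _ _ _ ha, Equiv.Perm.mul_apply]
      have hval : (x a).val = 0 ∨ (x a).val = 1 := by
        have := ZMod.val_lt (x a); omega
      rcases hval with h | h
      · rw [h, pow_zero, Equiv.Perm.one_apply]; exact ih
      · rw [h, pow_one]; exact ih.tail (hstep a _)
  exact key Finset.univ

lemma eqvGen_iff_reflTransGen {α : Type*} {r : α → α → Prop} (hs : Symmetric r) {a b : α} :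
    EqvGen r a b ↔ ReflTransGen r a b := by
  constructor
  · intro h
    induction h with
    | rel _ _ h => exact ReflTransGen.single h
    | refl _ => exact ReflTransGen.refl
    | symm _ _ _ ih => exact (@ReflTransGen.stdSymm _ _ ⟨fun a b h => hs h⟩).symm _ _ ih
    | trans _ _ _ _ _ ih₁ ih₂ => exact ih₁.trans ih₂
  · intro h
    induction h with
    | refl => exact EqvGen.refl a
    | tail _ hbc ih => exact ih.trans _ _ _ (EqvGen.rel _ _ hbc)

set_option maxHeartbeats 2000000 in
lemma range_lemma {n : ℕ} {V : Type} (φ : Fin (n+1) → V → V)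
    (hinv : ∀ c, Involutive (φ c))
    (hcommφ : ∀ k l w, φ k (φ l w) = φ l (φ k w))
    (C : Finset (Fin (n+1))) (v : V) :
    ∃ f : ({c // c ∈ C} → ZMod 2) → V,
      f 0 = v ∧
      Set.range f = {w | ReflTransGen (fun a b => ∃ c ∈ C, φ c a = b) v w} ∧
      ∀ (x : ({c // c ∈ C} → ZMod 2)) (c : {c // c ∈ C}),
        f (x + Pi.single c 1) = φ c.1 (f x) := by
  classical
  set g : {c // c ∈ C} → Equiv.Perm V := fun c => (hinv c.1).toPerm (φ c.1) with hg
  have hg_apply : ∀ c w, g c w = φ c.1 w := fun c w => rfl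
  have hcg : ∀ a b, Commute (g a) (g b) := by
    intro a b; apply Equiv.ext; intro w
    simp only [hg, Equiv.Perm.mul_apply, Involutive.coe_toPerm]
    exact hcommφ _ _ w
  have hsq : ∀ c, g c * g c = 1 := by
    intro c; apply Equiv.ext; intro w
    simp only [hg, Equiv.Perm.mul_apply, Involutive.coe_toPerm, Equiv.Perm.one_apply]
    exact hinv c.1 w
  have toggle : ∀ (x : ({c // c ∈ C} → ZMod 2)) (c : {c // c ∈ C}),
      rho g hcg (x + Pi.single c 1) v = φ c.1 (rho g hcg x v) := by
    intro x c
    rw [show x + Pi.single c 1 = Pi.single c 1 + x from add_comm _ _,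
      rho_add g hcg hsq, Equiv.Perm.mul_apply, rho_single g hcg, hg_apply]
  refine ⟨fun x => rho g hcg x v, ?_, ?_, toggle⟩
  · show rho g hcg 0 v = v
    rw [rho_zero]; rfl
  · apply Set.Subset.antisymm
    · rintro w ⟨x, rfl⟩
      exact reachable_rho g hcg (fun c w => ⟨c.1, c.2, (hg_apply c w).symm⟩) x v
    · intro w hw
      induction hw with
      | refl => exact ⟨0, by show rho g hcg 0 v = v; rw [rho_zero]; rfl⟩
      | @tail b w' hvb hbc ih =>
        obtain ⟨x, hx⟩ := ih
        obtain ⟨c, hc, hφ⟩ := hbc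
        have hx' : rho g hcg x v = b := hx
        have h2 : φ c (rho g hcg x v) = w' := by rw [hx']; exact hφ
        have h3 := (toggle x ⟨c, hc⟩).trans h2
        exact ⟨_, h3⟩

end Stmt8Aux



/-- An `(n+1)`-regular properly edge-colored graph is encoded by its color
matchings: for each color `c ∈ {0,…,n}` a fixed-point-free involution `φ c` on the vertex
set (`φ c v` is the vertex joined to `v` by the `c`-colored edge).  Suppose every
bi-colored cycle has length exactly four (for `k ≠ l`: `φ k v ≠ φ l v` and
`(φ k ∘ φ l)² = id`), and for every color set `C` with `1 ≤ |C| ≤ n` the subgraph induced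
by `C` has exactly `2^{n-|C|}` connected components.  Then the graph has exactly `2ⁿ`
vertices, and every connected component of the subgraph induced by a color set `C`
(`|C| ≤ n`) is colored-isomorphic to the `|C|`-dimensional cube with parallel edge classes
monochromatic: there is a bijection `f` from `{0,1}^C` onto the component such that the
`c`-colored edges correspond to flipping the coordinate `c`. -/
theorem stmt_8 (n : ℕ) (hn : 2 ≤ n) (V : Type) [Fintype V]
    (φ : Fin (n + 1) → V → V)
    (hinv : ∀ c, Function.Involutive (φ c))
    (hfpf : ∀ c v, φ c v ≠ v)
    (hlen4 : ∀ k l : Fin (n + 1), k ≠ l → ∀ v : V,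
      φ k v ≠ φ l v ∧ φ k (φ l (φ k (φ l v))) = v)
    (hcomp : ∀ C : Finset (Fin (n + 1)), 1 ≤ C.card → C.card ≤ n →
      Nat.card (Quot (fun v w : V => ∃ c ∈ C, φ c v = w)) = 2 ^ (n - C.card)) :
    Fintype.card V = 2 ^ n ∧
    ∀ C : Finset (Fin (n + 1)), C.card ≤ n → ∀ v : V,
      ∃ f : ({c // c ∈ C} → ZMod 2) → V,
        Function.Injective f ∧ f 0 = v ∧
        Set.range f =
          {w | Relation.ReflTransGen (fun a b => ∃ c ∈ C, φ c a = b) v w} ∧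
        ∀ (x : {c // c ∈ C} → ZMod 2) (c : {c // c ∈ C}),
          f (x + Pi.single c 1) = φ c.1 (f x) := by

  classical
  -- all the involutions commute
  have hcommφ : ∀ k l (w : V), φ k (φ l w) = φ l (φ k w) := by
    intro k l w
    rcases eq_or_ne k l with rfl | hkl
    · rfl
    · have h := (hlen4 k l hkl w).2
      have h1 : φ l (φ k (φ l w)) = φ k w :=
        (hinv k).injective (by rw [h, hinv k w])
      exact (hinv l).injective (by rw [h1, hinv l (φ k w)])
  -- relations are symmetric
  have hRsymm : ∀ C : Finset (Fin (n + 1)),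
      Symmetric (fun a b : V => ∃ c ∈ C, φ c a = b) := by
    rintro C a b ⟨c, hc, hab⟩
    exact ⟨c, hc, by rw [← hab]; exact hinv c a⟩
  have hquot : ∀ C : Finset (Fin (n + 1)), ∀ a b : V,
      Quot.mk (fun a b : V => ∃ c ∈ C, φ c a = b) a =
        Quot.mk (fun a b : V => ∃ c ∈ C, φ c a = b) b ↔
      Relation.ReflTransGen (fun a b : V => ∃ c ∈ C, φ c a = b) a b := by
    intro C a b
    rw [Quot.eq]
    exact Stmt8Aux.eqvGen_iff_reflTransGen (hRsymm C)
  have hcard_dom : ∀ C : Finset (Fin (n + 1)),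
      Fintype.card ({c // c ∈ C} → ZMod 2) = 2 ^ C.card := by
    intro C
    rw [Fintype.card_fun, ZMod.card, Fintype.card_coe]
  -- the key structural result: fibers of `Quot.mk` are images of cubes
  have key : ∀ C : Finset (Fin (n + 1)), ∀ v : V,
      ∃ f : ({c // c ∈ C} → ZMod 2) → V,
        f 0 = v ∧
        Set.range f =
          {w | Relation.ReflTransGen (fun a b => ∃ c ∈ C, φ c a = b) v w} ∧
        (∀ (x : {c // c ∈ C} → ZMod 2) (c : {c // c ∈ C}),
          f (x + Pi.single c 1) = φ c.1 (f x)) ∧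
        (Finset.univ.filter fun w =>
            Quot.mk (fun a b : V => ∃ c ∈ C, φ c a = b) w =
            Quot.mk (fun a b : V => ∃ c ∈ C, φ c a = b) v) =
          Finset.image f Finset.univ := by
    intro C v
    obtain ⟨f, hf0, hfr, hft⟩ := Stmt8Aux.range_lemma φ hinv hcommφ C v
    refine ⟨f, hf0, hfr, hft, ?_⟩
    ext w
    simp only [Finset.mem_filter, Finset.mem_univ, true_and, Finset.mem_image]
    constructor
    · intro hw
      have hr : Relation.ReflTransGen (fun a b : V => ∃ c ∈ C, φ c a = b) v w :=
        (@Relation.ReflTransGen.stdSymm _ _ ⟨fun a b h => hRsymm C h⟩).symm _ _ ((hquot C w v).mp hw)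
      have hw' : w ∈ Set.range f := by rw [hfr]; exact hr
      obtain ⟨x, hx⟩ := hw'
      exact ⟨x, hx⟩
    · rintro ⟨x, rfl⟩
      have h1 : f x ∈ Set.range f := Set.mem_range_self x
      rw [hfr] at h1
      exact (hquot C (f x) v).mpr ((@Relation.ReflTransGen.stdSymm _ _ ⟨fun a b h => hRsymm C h⟩).symm _ _ h1)
  -- fiber cardinality bound
  have hfible : ∀ C : Finset (Fin (n + 1)),
      ∀ q : Quot (fun a b : V => ∃ c ∈ C, φ c a = b),
      (Finset.univ.filter fun w =>
        Quot.mk (fun a b : V => ∃ c ∈ C, φ c a = b) w = q).card ≤ 2 ^ C.card := by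
    intro C q
    obtain ⟨w₀, rfl⟩ := Quot.exists_rep q
    obtain ⟨f, -, -, -, hfil⟩ := key C w₀
    rw [hfil]
    calc (Finset.image f Finset.univ).card ≤ Finset.univ.card := Finset.card_image_le
      _ = 2 ^ C.card := by rw [Finset.card_univ, hcard_dom]
  -- Part 1 : the number of vertices
  have hV : Fintype.card V = 2 ^ n := by
    have hC₀ : ({0} : Finset (Fin (n + 1))).card = 1 := Finset.card_singleton 0
    letI : Fintype (Quot (fun a b : V => ∃ c ∈ ({0} : Finset (Fin (n + 1))), φ c a = b)) := Fintype.ofFinite _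
    have hsum : Fintype.card V =
        ∑ q : Quot (fun a b : V => ∃ c ∈ ({0} : Finset (Fin (n + 1))), φ c a = b),
          (Finset.univ.filter fun w =>
            Quot.mk (fun a b : V => ∃ c ∈ ({0} : Finset (Fin (n + 1))), φ c a = b) w = q).card := by
      rw [← Finset.card_univ]
      exact Finset.card_eq_sum_card_fiberwise (fun x _ => Finset.mem_univ _)
    have hfib2 : ∀ q : Quot (fun a b : V => ∃ c ∈ ({0} : Finset (Fin (n + 1))), φ c a = b),
        (Finset.univ.filter fun w =>
          Quot.mk (fun a b : V => ∃ c ∈ ({0} : Finset (Fin (n + 1))), φ c a = b) w = q).card = 2 := by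
      intro q
      have hle := hfible {0} q
      rw [hC₀, pow_one] at hle
      obtain ⟨w₀, rfl⟩ := Quot.exists_rep q
      have hge : ({w₀, φ 0 w₀} : Finset V) ⊆
          Finset.univ.filter fun w =>
            Quot.mk (fun a b : V => ∃ c ∈ ({0} : Finset (Fin (n + 1))), φ c a = b) w =
            Quot.mk (fun a b : V => ∃ c ∈ ({0} : Finset (Fin (n + 1))), φ c a = b) w₀ := by
        intro w hw
        rcases Finset.mem_insert.mp hw with rfl | hw
        · exact Finset.mem_filter.mpr ⟨Finset.mem_univ _, rfl⟩
        · rw [Finset.mem_singleton] at hw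
          subst hw
          exact Finset.mem_filter.mpr ⟨Finset.mem_univ _,
            Quot.sound ⟨0, Finset.mem_singleton_self 0, hinv 0 w₀⟩⟩
      have h2 : (({w₀, φ 0 w₀} : Finset V)).card = 2 :=
        Finset.card_pair (Ne.symm (hfpf 0 w₀))
      have := Finset.card_le_card hge
      rw [h2] at this
      omega
    rw [hsum, Finset.sum_congr rfl fun q _ => hfib2 q, Finset.sum_const, smul_eq_mul,
      Finset.card_univ, ← Nat.card_eq_fintype_card,
      hcomp {0} (by rw [hC₀]) (by rw [hC₀]; omega), hC₀, ← pow_succ]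
    congr 1
    omega
  refine ⟨hV, ?_⟩
  -- Part 2
  intro C hC v
  rcases Nat.eq_zero_or_pos C.card with h0 | hpos
  · -- empty color set
    obtain rfl : C = ∅ := Finset.card_eq_zero.mp h0
    refine ⟨fun _ => v, ?_, rfl, ?_, ?_⟩
    · intro a b _
      funext c
      exact absurd c.2 (Finset.notMem_empty c.1)
    · apply Set.Subset.antisymm
      · rintro w ⟨x, rfl⟩
        exact Relation.ReflTransGen.refl
      · intro w hw
        have hwv : w = v := by
          induction hw with
          | refl => rfl
          | tail _ hbc ih =>
            obtain ⟨c, hc, -⟩ := hbc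
            exact absurd hc (Finset.notMem_empty c)
        exact ⟨fun _ => 0, hwv.symm⟩
    · intro x c
      exact absurd c.2 (Finset.notMem_empty c.1)
  · -- nonempty color set: use the counting hypothesis
    letI : Fintype (Quot (fun a b : V => ∃ c ∈ C, φ c a = b)) := Fintype.ofFinite _
    have hsum : Fintype.card V =
        ∑ q : Quot (fun a b : V => ∃ c ∈ C, φ c a = b),
          (Finset.univ.filter fun w =>
            Quot.mk (fun a b : V => ∃ c ∈ C, φ c a = b) w = q).card := by
      rw [← Finset.card_univ]
      exact Finset.card_eq_sum_card_fiberwise (fun x _ => Finset.mem_univ _)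
    have hQ : Fintype.card (Quot (fun a b : V => ∃ c ∈ C, φ c a = b)) =
        2 ^ (n - C.card) := by
      rw [← Nat.card_eq_fintype_card]
      exact hcomp C hpos hC
    have hall : ∀ q : Quot (fun a b : V => ∃ c ∈ C, φ c a = b),
        (Finset.univ.filter fun w =>
          Quot.mk (fun a b : V => ∃ c ∈ C, φ c a = b) w = q).card = 2 ^ C.card := by
      by_contra hq
      push_neg at hq
      obtain ⟨q₀, hq₀⟩ := hq
      have hlt :
          ∑ q : Quot (fun a b : V => ∃ c ∈ C, φ c a = b),
            (Finset.univ.filter fun w =>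
              Quot.mk (fun a b : V => ∃ c ∈ C, φ c a = b) w = q).card <
          ∑ _q : Quot (fun a b : V => ∃ c ∈ C, φ c a = b), 2 ^ C.card :=
        Finset.sum_lt_sum (fun i _ => hfible C i)
          ⟨q₀, Finset.mem_univ _, lt_of_le_of_ne (hfible C q₀) hq₀⟩
      rw [← hsum, hV, Finset.sum_const, smul_eq_mul, Finset.card_univ, hQ, ← pow_add] at hlt
      have : n - C.card + C.card = n := by omega
      rw [this] at hlt
      exact lt_irrefl _ hlt
    obtain ⟨f, hf0, hfr, hft, hfil⟩ := key C v
    have hinjcard : (Finset.image f Finset.univ).card =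
        (Finset.univ : Finset ({c // c ∈ C} → ZMod 2)).card := by
      rw [← hfil, hall]
      rw [Finset.card_univ, hcard_dom C]
    have hinj : Function.Injective f := by
      have h1 := Finset.card_image_iff.mp hinjcard
      rw [Finset.coe_univ] at h1
      exact Set.injOn_univ.mp h1
    exact ⟨f, hinj, hf0, hfr, hft⟩
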